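/- Kruskal correctness on a subgraph containing the MST: if G is a connected weighted graph with distinct edge weights, H is a subgraph of G containing all MST edges, then running Kruskal's edge-selection on the edges of H (in increasing weight order, adding an edge iff its endpoints are in different components of the edges selected so far) produces exactly the MST of G. -/

import Mathlib

noncomputable section
open Classical

variable {V : Type*}

/-- The total weight of the edge set of a graph (with respect to weights `w`). -/
def graphWeight [Finite V] (w : Sym2 V → ℝ) (T : SimpleGraph V) : ℝ :=
  ∑ e ∈ T.edgeSet.toFinite.toFinset, w e

/-- `T` is a minimum spanning tree of `G` with respect to the weights `w`. -/
def IsMST [Finite V] (G : SimpleGraph V) (w : Sym2 V → ℝ) (T : SimpleGraph V) : Prop :=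
  T ≤ G ∧ T.IsTree ∧
    ∀ T' : SimpleGraph V, T' ≤ G → T'.IsTree → graphWeight w T ≤ graphWeight w T'

/-- The endpoints of the edge `e` are joined by the edges in `S`. -/
def Joins (S : Finset (Sym2 V)) (e : Sym2 V) : Prop :=
  ∃ a b : V, e = s(a, b) ∧ (SimpleGraph.fromEdgeSet (S : Set (Sym2 V))).Reachable a b

/-- One step of Kruskal's algorithm: add the edge `e` to the selected set `S`
iff its endpoints lie in different components of the edges selected so far. -/
def kruskalStep (S : Finset (Sym2 V)) (e : Sym2 V) : Finset (Sym2 V) :=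
  if Joins S e then S else insert e S

/-- Kruskal's edge selection, processing the list of edges `L` in order. -/
def kruskal (L : List (Sym2 V)) : Finset (Sym2 V) :=
  L.foldl kruskalStep ∅

open SimpleGraph

/-- Walks avoiding an edge give reachability in the edge-deleted graph. -/
lemma reach_avoid {G : SimpleGraph V} {f : Sym2 V} {u v : V} (q : G.Walk u v)
    (h : f ∉ q.edges) : (G \ fromEdgeSet {f}).Reachable u v := by
  refine ⟨q.transfer _ fun e he => ?_⟩
  simp only [edgeSet_sdiff, edgeSet_fromEdgeSet, edgeSet_sdiff_sdiff_isDiag, Set.mem_diff,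
    Set.mem_singleton_iff]
  exact ⟨q.edges_subset_edgeSet he, fun h' => h (h' ▸ he)⟩

/-- Splitting a trail at an edge: both sides avoid the edge. -/
lemma walk_split {G : SimpleGraph V} {x y : V} {u v : V} (p : G.Walk u v)
    (hnd : p.edges.Nodup) (hf : s(x, y) ∈ p.edges) :
    ((G \ fromEdgeSet {s(x, y)}).Reachable u x ∧ (G \ fromEdgeSet {s(x, y)}).Reachable y v) ∨
    ((G \ fromEdgeSet {s(x, y)}).Reachable u y ∧ (G \ fromEdgeSet {s(x, y)}).Reachable x v) := by
  induction p with
  | nil => simp at hf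
  | @cons a b c h q ih =>
    rw [Walk.edges_cons, List.nodup_cons] at hnd
    rw [Walk.edges_cons, List.mem_cons] at hf
    rcases hf with hf | hf
    · have hq : s(x, y) ∉ q.edges := hf ▸ hnd.1
      rcases Sym2.eq_iff.mp hf.symm with ⟨rfl, rfl⟩ | ⟨rfl, rfl⟩
      · exact Or.inl ⟨Reachable.refl _, reach_avoid q hq⟩
      · exact Or.inr ⟨Reachable.refl _, reach_avoid q hq⟩
    · have hne : ¬ (fromEdgeSet {s(x, y)} : SimpleGraph V).Adj a b := by
        rw [fromEdgeSet_adj]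
        rintro ⟨h1, -⟩
        rw [Set.mem_singleton_iff] at h1
        exact hnd.1 (h1 ▸ hf)
      have hadj : (G \ fromEdgeSet {s(x, y)}).Adj a b := ⟨h, hne⟩
      rcases ih hnd.2 hf with ⟨h1, h2⟩ | ⟨h1, h2⟩
      · exact Or.inl ⟨hadj.reachable.trans h1, h2⟩
      · exact Or.inr ⟨hadj.reachable.trans h1, h2⟩

/-- Transferring connectivity along reachability of adjacent pairs. -/
lemma connected_transfer {A B : SimpleGraph V} (hA : A.Connected)
    (h : ∀ x y, A.Adj x y → B.Reachable x y) : B.Connected := by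
  have key : ∀ u v : V, A.Reachable u v → B.Reachable u v := by
    rintro u v ⟨p⟩
    induction p with
    | nil => exact Reachable.refl _
    | cons ha q ih => exact (h _ _ ha).trans ih
  haveI := hA.nonempty
  exact SimpleGraph.Connected.mk fun u v => key u v (hA.preconnected u v)

/-- The exchange argument: an edge outside the MST cannot be lighter than an edge
on the tree path between its endpoints. -/
lemma exchange [Finite V] {G : SimpleGraph V} {w : Sym2 V → ℝ} {T : SimpleGraph V}
    (hT : IsMST G w T) {a b : V} (hab : G.Adj a b) (heT : s(a, b) ∉ T.edgeSet)
    {f : Sym2 V} (p : T.Walk a b) (hnd : p.edges.Nodup) (hf : f ∈ p.edges)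
    (hlt : w s(a, b) < w f) : False := by
  obtain ⟨hle, htree, hmin⟩ := hT
  induction f using Sym2.ind with
  | _ x y =>
  have hfT : s(x, y) ∈ T.edgeSet := p.edges_subset_edgeSet hf
  have hxy : T.Adj x y := T.mem_edgeSet.mp hfT
  have hne : s(a, b) ≠ s(x, y) := fun h => heT (h ▸ hfT)
  set T' : SimpleGraph V := fromEdgeSet ((T.edgeSet \ {s(x, y)}) ∪ {s(a, b)}) with hT'def
  have hE : T'.edgeSet = (T.edgeSet \ {s(x, y)}) ∪ {s(a, b)} := by
    rw [hT'def, edgeSet_fromEdgeSet]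
    apply sdiff_eq_left.mpr
    rw [Set.disjoint_left]
    rintro z hz hdiag
    rcases hz with ⟨hz, -⟩ | hz
    · exact (T.not_isDiag_of_mem_edgeSet hz) hdiag
    · rw [Set.mem_singleton_iff] at hz
      subst hz
      exact hab.ne (Sym2.mk_isDiag_iff.mp hdiag)
  -- T' ≤ G
  have hT'le : T' ≤ G := by
    rw [← fromEdgeSet_edgeSet G]
    apply fromEdgeSet_mono
    rintro z (⟨hz, -⟩ | hz)
    · exact edgeSet_mono hle hz
    · rw [Set.mem_singleton_iff] at hz; exact hz ▸ (G.mem_edgeSet.mpr hab)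
  -- the deleted graph sits inside T'
  have hdel : T \ fromEdgeSet {s(x, y)} ≤ T' := by
    intro u' v' huv
    rw [sdiff_adj] at huv
    rw [hT'def, fromEdgeSet_adj]
    refine ⟨Or.inl ⟨T.mem_edgeSet.mpr huv.1, ?_⟩, huv.1.ne⟩
    intro hmem
    exact huv.2 ((fromEdgeSet_adj _).mpr ⟨hmem, huv.1.ne⟩)
  have hT'ab : T'.Adj a b := by
    rw [hT'def, fromEdgeSet_adj]
    exact ⟨Or.inr rfl, hab.ne⟩
  -- connectivity of T'
  have hconn' : T'.Connected := by
    apply connected_transfer htree.isConnected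
    intro u' v' huv
    by_cases h : s(u', v') = s(x, y)
    · have hsplit := walk_split p hnd hf
      rcases Sym2.eq_iff.mp h with ⟨rfl, rfl⟩ | ⟨rfl, rfl⟩
      · rcases hsplit with ⟨h1, h2⟩ | ⟨h1, h2⟩
        · exact ((h1.mono hdel).symm.trans hT'ab.reachable).trans (h2.mono hdel).symm
        · exact ((h2.mono hdel).trans hT'ab.reachable.symm).trans (h1.mono hdel)
      · rcases hsplit with ⟨h1, h2⟩ | ⟨h1, h2⟩
        · exact ((h2.mono hdel).trans hT'ab.reachable.symm).trans (h1.mono hdel)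
        · exact ((h1.mono hdel).symm.trans hT'ab.reachable).trans (h2.mono hdel).symm
    · refine Adj.reachable ?_
      rw [hT'def, fromEdgeSet_adj]
      exact ⟨Or.inl ⟨T.mem_edgeSet.mpr huv, h⟩, huv.ne⟩
  -- acyclicity of T'
  have hbridge : ¬(T \ fromEdgeSet {s(x, y)}).Reachable x y :=
    ((isAcyclic_iff_forall_adj_isBridge.mp htree.IsAcyclic) hxy)
  have hacy : T'.IsAcyclic := by
    intro u c hc
    by_cases hec : s(a, b) ∈ c.edges
    · have h1 : T'.Adj a b ∧ (T' \ fromEdgeSet {s(a, b)}).Reachable a b :=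
        adj_and_reachable_delete_edges_iff_exists_cycle.mpr ⟨u, c, hc, hec⟩
      have hmono : T' \ fromEdgeSet {s(a, b)} ≤ T \ fromEdgeSet {s(x, y)} := by
        intro u' v' huv
        rw [sdiff_adj] at huv ⊢
        obtain ⟨huv1, huv2⟩ := huv
        rw [hT'def, fromEdgeSet_adj] at huv1
        obtain ⟨hm, hne'⟩ := huv1
        rcases hm with ⟨hm, hm2⟩ | hm
        · refine ⟨T.mem_edgeSet.mp hm, fun hadj => hm2 ((fromEdgeSet_adj _).mp hadj).1⟩
        · exact absurd ((fromEdgeSet_adj _).mpr ⟨hm, hne'⟩) huv2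
      have hrab : (T \ fromEdgeSet {s(x, y)}).Reachable a b := h1.2.mono hmono
      rcases walk_split p hnd hf with ⟨h1', h2'⟩ | ⟨h1', h2'⟩
      · exact hbridge ((h1'.symm.trans hrab).trans h2'.symm)
      · exact hbridge ((h2'.trans hrab.symm).trans h1')
    · have hce : ∀ g ∈ c.edges, g ∈ T.edgeSet := by
        intro g hg
        have := c.edges_subset_edgeSet hg
        rw [hE] at this
        rcases this with ⟨hg1, -⟩ | hg1
        · exact hg1
        · rw [Set.mem_singleton_iff] at hg1; exact absurd (hg1 ▸ hg) hec
      exact htree.IsAcyclic (c.transfer T hce) (hc.transfer hce)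
  -- weight comparison
  have hfG : s(x, y) ∈ G.edgeSet := edgeSet_mono hle hfT
  have hfA : s(x, y) ∈ T.edgeSet.toFinite.toFinset := by
    rw [Set.Finite.mem_toFinset]; exact hfT
  have hA' : T'.edgeSet.toFinite.toFinset
      = insert s(a, b) ((T.edgeSet.toFinite.toFinset).erase s(x, y)) := by
    ext z
    simp only [Set.Finite.mem_toFinset, hE, Set.mem_union, Set.mem_diff, Set.mem_singleton_iff,
      Finset.mem_insert, Finset.mem_erase, Set.Finite.mem_toFinset]
    tauto
  have hwT' : graphWeight w T' = graphWeight w T - w s(x, y) + w s(a, b) := by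
    unfold graphWeight
    rw [hA', Finset.sum_insert, Finset.sum_erase_eq_sub hfA]
    · ring
    · simp only [Finset.mem_erase, Set.Finite.mem_toFinset]
      rintro ⟨-, hmem⟩
      exact heT hmem
  have := hmin T' hT'le ⟨hconn', hacy⟩
  rw [hwT'] at this
  linarith

/-- A tree edge not in `S` is never joined by edges of `S` inside the tree. -/
lemma not_joins {T : SimpleGraph V} (hac : T.IsAcyclic) {S : Finset (Sym2 V)}
    (hS : ∀ g ∈ S, g ∈ T.edgeSet) {a b : V} (hadj : T.Adj a b) (he : s(a, b) ∉ S) :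
    ¬(fromEdgeSet (S : Set (Sym2 V))).Reachable a b := by
  intro hr
  have hbr := (isAcyclic_iff_forall_adj_isBridge.mp hac) hadj
  apply (show ¬(T \ fromEdgeSet {s(a, b)}).Reachable a b from hbr)
  refine hr.mono ?_
  intro u v huv
  obtain ⟨hm, hne⟩ := (fromEdgeSet_adj _).mp huv
  rw [sdiff_adj]
  refine ⟨T.mem_edgeSet.mp (hS _ hm), fun hadj' => ?_⟩
  obtain ⟨hm', -⟩ := (fromEdgeSet_adj _).mp hadj'
  rw [Set.mem_singleton_iff] at hm'
  exact he (hm' ▸ hm)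

/-- The cycle property: a non-tree edge is joined by the lighter tree edges. -/
lemma joins_of_lt [Finite V] {G : SimpleGraph V} {w : Sym2 V → ℝ} (hw : Set.InjOn w G.edgeSet)
    {T : SimpleGraph V} (hT : IsMST G w T) {S : Finset (Sym2 V)} {e : Sym2 V}
    (heG : e ∈ G.edgeSet) (heT : e ∉ T.edgeSet)
    (hcomp : ∀ f ∈ T.edgeSet, w f < w e → f ∈ S) : Joins S e := by
  induction e using Sym2.ind with
  | _ a b =>
  have hab : G.Adj a b := G.mem_edgeSet.mp heG
  obtain ⟨p0⟩ := hT.2.1.isConnected.preconnected a b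
  set p : T.Walk a b := p0.toPath.1 with hpdef
  have hpath : p.IsPath := p0.toPath.2
  have hall : ∀ g ∈ p.edges, g ∈ (S : Set (Sym2 V)) := by
    intro g hg
    by_contra hgS
    have hgT : g ∈ T.edgeSet := p.edges_subset_edgeSet hg
    have h1 : ¬ w g < w s(a, b) := fun h => hgS (hcomp g hgT h)
    have h2 : w s(a, b) ≠ w g := fun h =>
      heT ((hw heG (edgeSet_mono hT.1 hgT) h) ▸ hgT)
    have hlt : w s(a, b) < w g := lt_of_le_of_ne (not_lt.mp h1) h2
    exact exchange hT hab heT p hpath.isTrail.edges_nodup hg hlt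
  refine ⟨a, b, rfl, ⟨p.transfer _ fun g hg => ?_⟩⟩
  rw [edgeSet_fromEdgeSet, Set.mem_diff]
  exact ⟨hall g hg, T.not_isDiag_of_mem_edgeSet (p.edges_subset_edgeSet hg)⟩

/-- Kruskal invariant: folding over the remaining sorted edges recovers the MST. -/
lemma kruskal_aux [Finite V] {G : SimpleGraph V} {w : Sym2 V → ℝ} (hw : Set.InjOn w G.edgeSet)
    {H T : SimpleGraph V} (hHG : H ≤ G) (hT : IsMST G w T) :
    ∀ (L : List (Sym2 V)) (S : Finset (Sym2 V)),
      (∀ e ∈ L, e ∈ H.edgeSet) → L.Pairwise (fun e f => w e < w f) →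
      (∀ f ∈ S, f ∈ T.edgeSet) → (∀ f ∈ S, ∀ e ∈ L, w f < w e) →
      (∀ f ∈ T.edgeSet, f ∉ S → f ∈ L) →
      ((L.foldl kruskalStep S : Finset (Sym2 V)) : Set (Sym2 V)) = T.edgeSet := by
  intro L
  induction L with
  | nil =>
    intro S _ _ h3 _ h5
    simp only [List.foldl_nil]
    ext g
    exact ⟨fun hg => h3 g hg, fun hg => by_contra fun hng => by simpa using h5 g hg hng⟩
  | cons e rest ih =>
    intro S h1 h2 h3 h4 h5
    rw [List.foldl_cons]
    rw [List.pairwise_cons] at h2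
    by_cases heT : e ∈ T.edgeSet
    · -- e is a tree edge: it gets added
      have heS : e ∉ S := fun h => lt_irrefl _ (h4 e h e (List.mem_cons_self))
      have hJ : ¬ Joins S e := by
        rintro ⟨a, b, rfl, hr⟩
        exact not_joins hT.2.1.IsAcyclic h3 (T.mem_edgeSet.mp heT) heS hr
      rw [kruskalStep, if_neg hJ]
      apply ih (insert e S)
      · exact fun g hg => h1 g (List.mem_cons_of_mem e hg)
      · exact h2.2
      · intro f hf
        rcases Finset.mem_insert.mp hf with rfl | hf
        · exact heT
        · exact h3 f hf
      · intro f hf g hg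
        rcases Finset.mem_insert.mp hf with rfl | hf
        · exact h2.1 g hg
        · exact lt_trans (h4 f hf e (List.mem_cons_self)) (h2.1 g hg)
      · intro f hf hfS
        have : f ∈ e :: rest := h5 f hf fun h => hfS (Finset.mem_insert_of_mem h)
        rcases List.mem_cons.mp this with rfl | h
        · exact absurd (Finset.mem_insert_self f S) hfS
        · exact h
    · -- e is not a tree edge: it gets skipped
      have hJ : Joins S e := by
        apply joins_of_lt hw hT (edgeSet_mono hHG (h1 e (List.mem_cons_self))) heT
        intro f hf hwf
        by_contra hfS
        rcases List.mem_cons.mp (h5 f hf hfS) with rfl | h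
        · exact lt_irrefl _ hwf
        · exact lt_asymm hwf (h2.1 f h)
      rw [kruskalStep, if_pos hJ]
      apply ih S
      · exact fun g hg => h1 g (List.mem_cons_of_mem e hg)
      · exact h2.2
      · exact h3
      · exact fun f hf g hg => h4 f hf g (List.mem_cons_of_mem e hg)
      · intro f hf hfS
        rcases List.mem_cons.mp (h5 f hf hfS) with rfl | h
        · exact absurd hf heT
        · exact h

theorem stmt_7 [Finite V] (G : SimpleGraph V) (hG : G.Connected)
    (w : Sym2 V → ℝ) (hw : Set.InjOn w G.edgeSet)
    (H : SimpleGraph V) (hHG : H ≤ G)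
    (T : SimpleGraph V) (hT : IsMST G w T) (hTH : T.edgeSet ⊆ H.edgeSet)
    (L : List (Sym2 V)) (hLmem : ∀ e, e ∈ L ↔ e ∈ H.edgeSet)
    (hsorted : L.Pairwise (fun e f => w e < w f)) :
    (kruskal L : Set (Sym2 V)) = T.edgeSet := by
  apply kruskal_aux hw hHG hT L ∅
  · exact fun e he => (hLmem e).mp he
  · exact hsorted
  · simp
  · simp
  · exact fun f hf _ => (hLmem f).mpr (hTH hf)
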